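/- Let l be odd with 2^k < l < 2^{k+1}, and let u < k. Then for every residue a with 1 ≤ a ≤ 2^u, the function m ↦ ν₂(C_{l, 2^u(m−1)+a}) − ν₂(m) is not constant on m ≥ 1. -/

import Mathlib

open Finset

/-- The 2-adic valuation of `A_{l,n}`, given by `ν₂(A_{l,n}) = l + Σ_{j=-l+1}^{l} ν₂(n+j)`. -/
noncomputable def nuA (l : ℕ) (n : ℤ) : ℕ :=
  l + ∑ j ∈ Finset.Icc (-(l : ℤ) + 1) (l : ℤ), padicValInt 2 (n + j)

/-- For odd `l`, the 2-adic valuation of `C_{l,m} = A_{l, l + 2(m-1)}`. -/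
noncomputable def nuC (l m : ℕ) : ℕ := nuA l ((l : ℤ) + 2 * ((m : ℤ) - 1))

/-- `F n = ν₂(n!) = ∑_{i=1}^n ν₂(i)`. -/
noncomputable def F (n : ℕ) : ℕ := ∑ i ∈ Finset.Ioc 0 n, padicValNat 2 i

lemma F_succ (n : ℕ) : F (n + 1) = F n + padicValNat 2 (n + 1) := by
  unfold F
  rw [← Finset.Icc_add_one_left_eq_Ioc, ← Finset.Icc_add_one_left_eq_Ioc, Finset.sum_Icc_succ_top (by omega)]

lemma padic_odd {n : ℕ} (h : ¬ 2 ∣ n) : padicValNat 2 n = 0 :=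
  padicValNat.eq_zero_of_not_dvd h

lemma padic_two_mul (n : ℕ) (hn : n ≠ 0) :
    padicValNat 2 (2 * n) = padicValNat 2 n + 1 := by
  rw [padicValNat.mul (by norm_num) hn, padicValNat.self (by norm_num)]
  ring

lemma F_two_mul (n : ℕ) : F (2 * n) = n + F n := by
  induction n with
  | zero => simp [F]
  | succ n ih =>
    have h1 : 2 * (n + 1) = (2 * n + 1) + 1 := by ring
    rw [h1, F_succ]
    have h2 : (2 * n + 1) = (2 * n) + 1 := rfl
    rw [h2, F_succ, ih, padic_odd (n := 2 * n + 1) (by omega)]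
    have h3 : 2 * n + 1 + 1 = 2 * (n + 1) := by ring
    rw [h3, padic_two_mul (n + 1) (by omega), F_succ]
    omega

lemma F_two_mul_add_one (n : ℕ) : F (2 * n + 1) = n + F n := by
  rw [F_succ, F_two_mul, padic_odd (n := 2 * n + 1) (by omega)]
  omega

/-- Adding below the leading power of two: no carries. -/
lemma F_P : ∀ M x : ℕ, x < 2 ^ M → F (2 ^ (M + 1) + x) = F (2 ^ M + x) + 2 ^ M := by
  intro M
  induction M with
  | zero =>
    intro x hx
    interval_cases x
    show F 2 = F 1 + 1
    have h2 : (2 : ℕ) = 2 * 1 := rfl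
    rw [h2, F_two_mul]
    simp [F, padicValNat.one]
  | succ M ih =>
    intro x hx
    have hpow : (2 : ℕ) ^ (M + 1) = 2 * 2 ^ M := by ring
    rcases Nat.even_or_odd x with ⟨y, hy⟩ | ⟨y, hy⟩
    · subst hy
      have hy2 : y < 2 ^ M := by omega
      have e1 : 2 ^ (M + 1 + 1) + (y + y) = 2 * (2 ^ (M + 1) + y) := by ring
      have e2 : 2 ^ (M + 1) + (y + y) = 2 * (2 ^ M + y) := by ring
      rw [e1, e2, F_two_mul, F_two_mul, ih y hy2]
      omega
    · subst hy
      have hy2 : y < 2 ^ M := by omega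
      have e1 : 2 ^ (M + 1 + 1) + (2 * y + 1) = 2 * (2 ^ (M + 1) + y) + 1 := by ring
      have e2 : 2 ^ (M + 1) + (2 * y + 1) = 2 * (2 ^ M + y) + 1 := by ring
      rw [e1, e2, F_two_mul_add_one, F_two_mul_add_one, ih y hy2]
      omega

/-- Subtracting below the leading power of two. -/
lemma F_Q : ∀ M g : ℕ, 1 ≤ g → g ≤ 2 ^ M →
    F (2 ^ (M + 1) - g) + 1 = F (2 ^ M - g) + 2 ^ M := by
  intro M
  induction M with
  | zero =>
    intro g h1 h2
    interval_cases g
    show F 1 + 1 = F 0 + 1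
    simp [F, padicValNat.one]
  | succ M ih =>
    intro g h1 h2
    have hpow : (2 : ℕ) ^ (M + 1) = 2 * 2 ^ M := by ring
    have hpow2 : (2 : ℕ) ^ (M + 1 + 1) = 2 * 2 ^ (M + 1) := by ring
    have hM1 : 1 ≤ 2 ^ M := Nat.one_le_two_pow
    rcases Nat.even_or_odd g with ⟨h, hh⟩ | ⟨h, hh⟩
    · have hh1 : 1 ≤ h := by omega
      have hh2 : h ≤ 2 ^ M := by omega
      have e1 : 2 ^ (M + 1 + 1) - (h + h) = 2 * (2 ^ (M + 1) - h) := by omega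
      have e2 : 2 ^ (M + 1) - (h + h) = 2 * (2 ^ M - h) := by omega
      rw [hh, e1, e2, F_two_mul, F_two_mul]
      have := ih h hh1 hh2
      omega
    · have hh2 : h + 1 ≤ 2 ^ M := by omega
      have e1 : 2 ^ (M + 1 + 1) - (2 * h + 1) = 2 * (2 ^ (M + 1) - (h + 1)) + 1 := by omega
      have e2 : 2 ^ (M + 1) - (2 * h + 1) = 2 * (2 ^ M - (h + 1)) + 1 := by omega
      rw [hh, e1, e2, F_two_mul_add_one, F_two_mul_add_one]
      have := ih (h + 1) (by omega) hh2
      omega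

/-- Integer interval sums of `padicValInt` over positive intervals equal nat sums. -/
lemma sumInt (a : ℕ) (ha : 1 ≤ a) : ∀ b : ℕ,
    ∑ j ∈ Finset.Icc (a : ℤ) (b : ℤ), padicValInt 2 j
      = ∑ i ∈ Finset.Icc a b, padicValNat 2 i := by
  intro b
  induction b with
  | zero =>
    rw [Finset.Icc_eq_empty (by exact_mod_cast (by omega : ¬ (a : ℤ) ≤ (0 : ℕ))),
      Finset.Icc_eq_empty (by omega)]
    simp
  | succ b ih =>
    by_cases hab : a ≤ b + 1
    · have h1 : Finset.Icc (a : ℤ) ((b : ℤ) + 1)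
          = insert ((b : ℤ) + 1) (Finset.Icc (a : ℤ) (b : ℤ)) := by
        ext x
        simp only [Finset.mem_Icc, Finset.mem_insert]
        omega
      have h2 : ((b : ℤ) + 1) ∉ Finset.Icc (a : ℤ) (b : ℤ) := by
        simp only [Finset.mem_Icc]; omega
      have hcast : ((b + 1 : ℕ) : ℤ) = (b : ℤ) + 1 := by push_cast; ring
      rw [hcast, h1, Finset.sum_insert h2, ih, Finset.sum_Icc_succ_top hab]
      have hval : padicValInt 2 ((b : ℤ) + 1) = padicValNat 2 (b + 1) := by
        rw [← hcast, padicValInt.of_nat]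
      omega
    · rw [Finset.Icc_eq_empty (by exact_mod_cast (by omega : ¬ (a : ℤ) ≤ ((b + 1 : ℕ) : ℤ))),
        Finset.Icc_eq_empty (by omega)]
      simp

/-- Key formula: `nuC l (w+1) + F w = 2l + F (w + l)`. -/
lemma nuC_eq (l w : ℕ) : nuC l (w + 1) + F w = 2 * l + F (w + l) := by
  have hshift : ∑ j ∈ Finset.Icc (-(l : ℤ) + 1) (l : ℤ),
      padicValInt 2 (((l : ℤ) + 2 * (((w + 1 : ℕ) : ℤ) - 1)) + j)
      = ∑ i ∈ Finset.Icc ((2 * w + 1 : ℕ) : ℤ) ((2 * w + 2 * l : ℕ) : ℤ),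
          padicValInt 2 i := by
    have hb1 : -(l : ℤ) + 1 + ((l : ℤ) + 2 * (((w + 1 : ℕ) : ℤ) - 1))
        = ((2 * w + 1 : ℕ) : ℤ) := by push_cast; ring
    have hb2 : (l : ℤ) + ((l : ℤ) + 2 * (((w + 1 : ℕ) : ℤ) - 1))
        = ((2 * w + 2 * l : ℕ) : ℤ) := by push_cast; ring
    symm
    rw [← hb1, ← hb2, ← Finset.map_add_right_Icc, Finset.sum_map]
    apply Finset.sum_congr rfl
    intro j _
    simp [addRightEmbedding, add_comm]
  have hcons : F (2 * w) + ∑ i ∈ Finset.Ioc (2 * w) (2 * w + 2 * l), padicValNat 2 i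
      = F (2 * w + 2 * l) := by
    unfold F
    rw [Finset.sum_Ioc_consecutive _ (by omega) (by omega)]
  have hIcc : Finset.Icc (2 * w + 1) (2 * w + 2 * l) = Finset.Ioc (2 * w) (2 * w + 2 * l) := by
    rw [← Finset.Icc_add_one_left_eq_Ioc]
  have key : nuC l (w + 1) + F (2 * w) = l + F (2 * w + 2 * l) := by
    unfold nuC nuA
    rw [hshift, sumInt (2 * w + 1) (by omega) (2 * w + 2 * l), hIcc]
    omega
  have h1 : F (2 * w) = w + F w := F_two_mul w
  have h2 : F (2 * w + 2 * l) = (w + l) + F (w + l) := by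
    have h3 : 2 * w + 2 * l = 2 * (w + l) := by ring
    rw [h3, F_two_mul]
  omega

lemma padic_pow_sub_one (T : ℕ) (hT : 1 ≤ T) : padicValNat 2 (2 ^ T - 1) = 0 := by
  apply padic_odd
  have h2 : (2 : ℕ) ∣ 2 ^ T := dvd_pow_self 2 (by omega)
  have h3 : 2 ≤ 2 ^ T := by
    calc (2 : ℕ) = 2 ^ 1 := rfl
    _ ≤ 2 ^ T := Nat.pow_le_pow_right (by norm_num) hT
  omega

theorem no_terminal_before_k (l k u : ℕ) (hl : Odd l) (hlo : 2 ^ k < l) (hhi : l < 2 ^ (k + 1))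
    (hu : u < k) (a : ℕ) (ha1 : 1 ≤ a) (ha2 : a ≤ 2 ^ u) :
    ¬ ∃ c : ℤ, ∀ m : ℕ, 1 ≤ m →
      (nuC l (2 ^ u * (m - 1) + a) : ℤ) - padicValNat 2 m = c := by
  rintro ⟨c, hc⟩
  set T := k + 2 with hT
  set M := u + T with hM
  set g := 2 ^ (u + 1) + 1 - a with hg
  set e := l + a - 1 - 2 ^ (u + 1) with he
  have hu1 : 2 ^ (u + 1) ≤ 2 ^ k := Nat.pow_le_pow_right (by norm_num) (by omega)
  have hl2 : 2 ^ (u + 1) < l := by omega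
  have hA1 : 1 ≤ 2 ^ u := Nat.one_le_two_pow
  have hau1 : a ≤ 2 ^ (u + 1) :=
    le_trans ha2 (Nat.pow_le_pow_right (by norm_num) (by omega))
  have hg1 : 1 ≤ g := by omega
  have hgM : g ≤ 2 ^ M := by
    have h1 : 2 ^ (u + 1) ≤ 2 ^ M := Nat.pow_le_pow_right (by norm_num) (by omega)
    omega
  have heM : e < 2 ^ M := by
    have h1 : l + a < 2 ^ (k + 1) + 2 ^ u := by omega
    have h2 : 2 ^ u ≤ 2 ^ (k + 1) := Nat.pow_le_pow_right (by norm_num) (by omega)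
    have h3 : (2 : ℕ) ^ (k + 2) = 2 ^ (k + 1) + 2 ^ (k + 1) := by ring
    have h4 : (2 : ℕ) ^ (k + 2) ≤ 2 ^ M := Nat.pow_le_pow_right (by norm_num) (by omega)
    omega
  have hegl : e + g = l := by omega
  -- key: value of nuC at m = 2^T' - 1
  have key : ∀ T' : ℕ, 1 ≤ T' → g ≤ 2 ^ (u + T') →
      nuC l (2 ^ u * (2 ^ T' - 1 - 1) + a) + F (2 ^ (u + T') - g)
        = 2 * l + F (2 ^ (u + T') + e) := by
    intro T' hT' hgM'
    have hB : 2 ≤ 2 ^ T' := by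
      calc (2 : ℕ) = 2 ^ 1 := rfl
      _ ≤ 2 ^ T' := Nat.pow_le_pow_right (by norm_num) hT'
    have hpow : (2 : ℕ) ^ (u + T') = 2 ^ u * 2 ^ T' := pow_add 2 u T'
    have hmul : 2 ^ u * (2 ^ T' - 1 - 1) = 2 ^ u * 2 ^ T' - 2 ^ u * 2 := by
      have h5 : 2 ^ T' - 1 - 1 = 2 ^ T' - 2 := by omega
      rw [h5, Nat.mul_sub]
    have h2A : 2 ^ u * 2 ≤ 2 ^ u * 2 ^ T' := Nat.mul_le_mul_left _ hB
    have harg : 2 ^ u * (2 ^ T' - 1 - 1) + a = (2 ^ (u + T') - g) + 1 := by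
      rw [hmul, hpow]
      omega
    have hwl : (2 ^ (u + T') - g) + l = 2 ^ (u + T') + e := by omega
    rw [harg]
    rw [nuC_eq l (2 ^ (u + T') - g), hwl]
  have hm1 : (1 : ℕ) ≤ 2 ^ T - 1 := by
    have : 2 ≤ 2 ^ T := by
      calc (2 : ℕ) = 2 ^ 1 := rfl
      _ ≤ 2 ^ T := Nat.pow_le_pow_right (by norm_num) (by omega)
    omega
  have hm2 : (1 : ℕ) ≤ 2 ^ (T + 1) - 1 := by
    have : 2 ≤ 2 ^ (T + 1) := by
      calc (2 : ℕ) = 2 ^ 1 := rfl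
      _ ≤ 2 ^ (T + 1) := Nat.pow_le_pow_right (by norm_num) (by omega)
    omega
  have hc1 := hc (2 ^ T - 1) hm1
  have hc2 := hc (2 ^ (T + 1) - 1) hm2
  rw [padic_pow_sub_one T (by omega)] at hc1
  rw [padic_pow_sub_one (T + 1) (by omega)] at hc2
  push_cast at hc1 hc2
  have hne : nuC l (2 ^ u * (2 ^ T - 1 - 1) + a)
      = nuC l (2 ^ u * (2 ^ (T + 1) - 1 - 1) + a) := by omega
  have hk1 := key T (by omega) hgM
  rw [← hM] at hk1
  have hgM2 : g ≤ 2 ^ (u + (T + 1)) := by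
    have : (2 : ℕ) ^ M ≤ 2 ^ (u + (T + 1)) := Nat.pow_le_pow_right (by norm_num) (by omega)
    omega
  have hk2 := key (T + 1) (by omega) hgM2
  have hMe : u + (T + 1) = M + 1 := by omega
  rw [hMe] at hk2
  have hP := F_P M e heM
  have hQ := F_Q M g hg1 hgM
  omega
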